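/- For z1, z2 ∈ H with Re(z1) = Re(z2), the Barrlund distance with parameter p ≥ 1 equals b_{H,p}(z1,z2) = |Im(z1) - Im(z2)| / (Im(z1)^p + Im(z2)^p)^{1/p}. -/
import Mathlib


/-- Barrlund distance with parameter `p` in the upper half plane. -/
noncomputable def barrlundH (p : ℝ) (z1 z2 : ℂ) : ℝ :=
  sSup (Set.range fun t : ℝ =>
    dist z1 z2 / (dist z1 (t : ℂ) ^ p + dist (t : ℂ) z2 ^ p) ^ (1 / p))

theorem stmt13 (z1 z2 : ℂ) (hz1 : 0 < z1.im) (hz2 : 0 < z2.im)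
    (hre : z1.re = z2.re) (p : ℝ) (hp : 1 ≤ p) :
    barrlundH p z1 z2 = |z1.im - z2.im| / (z1.im ^ p + z2.im ^ p) ^ (1 / p) := by
  have hp0 : 0 < p := lt_of_lt_of_le one_pos hp
  set t0 : ℝ := z1.re with ht0
  have hD : dist z1 z2 = |z1.im - z2.im| := by
    rw [Complex.dist_of_re_eq hre, Real.dist_eq]
  have ha0 : dist z1 (t0 : ℂ) = z1.im := by
    rw [Complex.dist_of_re_eq (by simp [ht0]), Real.dist_eq]
    simp [abs_of_pos hz1]
  have hb0 : dist (t0 : ℂ) z2 = z2.im := by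
    rw [Complex.dist_of_re_eq (by simp only [Complex.ofReal_re]; exact hre), Real.dist_eq]
    simp [abs_of_pos hz2, abs_sub_comm]
  have key : IsGreatest (Set.range fun t : ℝ =>
      dist z1 z2 / (dist z1 (t : ℂ) ^ p + dist (t : ℂ) z2 ^ p) ^ (1 / p))
      (|z1.im - z2.im| / (z1.im ^ p + z2.im ^ p) ^ (1 / p)) := by
    constructor
    · exact ⟨t0, by simp only [ha0, hb0, hD]⟩
    · rintro x ⟨t, rfl⟩
      have ha : z1.im ≤ dist z1 (t : ℂ) := by
        have h := Complex.abs_im_le_norm (z1 - t)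
        rw [Complex.dist_eq]
        simpa [abs_of_pos hz1] using h
      have hb : z2.im ≤ dist (t : ℂ) z2 := by
        have h := Complex.abs_im_le_norm ((t : ℂ) - z2)
        rw [Complex.dist_eq]
        simpa [abs_of_pos hz2, abs_sub_comm] using h
      simp only
      rw [hD]
      gcongr |z1.im - z2.im| / (?_ + ?_) ^ (1/p)
      · exact Real.rpow_le_rpow hz1.le ha hp0.le
      · exact Real.rpow_le_rpow hz2.le hb hp0.le
  exact key.csSup_eq
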